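/- Let r ≥ 1 and let Γ_r be the metric graph on vertices v₁,…,v_r where v_{i−1} and v_i are joined by exactly i edges of length 1 (for i = 2,…,r) and there are no other edges. Then the divisor v₁ + v₂ + ⋯ + v_r on Γ_r has rank at least 1. -/

import Mathlib

open Set

/-- A function g : ℝ → ℝ is piecewise linear with integer slopes on [0,1]. -/
def IsPLZ (g : ℝ → ℝ) : Prop :=
  ∃ (n : ℕ) (t : Fin (n + 1) → ℝ), t 0 = 0 ∧ t (Fin.last n) = 1 ∧ Monotone t ∧
    ∀ i : Fin n, ∃ m : ℤ, ∀ x ∈ Set.Icc (t i.castSucc) (t i.succ),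
      g x = g (t i.castSucc) + (m : ℝ) * (x - t i.castSucc)

open Classical in
/-- The right-hand slope of g at a (when it is a well-defined integer). -/
noncomputable def rightSlope (g : ℝ → ℝ) (a : ℝ) : ℤ :=
  if h : ∃ m : ℤ, ∃ δ > (0:ℝ), ∀ x ∈ Set.Icc a (a + δ), g x = g a + (m : ℝ) * (x - a)
  then h.choose else 0

open Classical in
/-- The left-hand slope of g at a (when it is a well-defined integer). -/
noncomputable def leftSlope (g : ℝ → ℝ) (a : ℝ) : ℤ :=
  if h : ∃ m : ℤ, ∃ δ > (0:ℝ), ∀ x ∈ Set.Icc (a - δ) a, g x = g a + (m : ℝ) * (x - a)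
  then h.choose else 0

/-- A (loopless) multigraph: each edge e is a segment from `src e` to `tgt e`,
identified with the unit interval [0,1]. -/
structure MultiGraph where
  V : Type
  E : Type
  src : E → V
  tgt : E → V

namespace MultiGraph

variable (G : MultiGraph)

/-- The points of the associated metric graph: the vertices together with the interior
points of the edges. -/
def Pt : Type := G.V ⊕ (G.E × {t : ℝ // 0 < t ∧ t < 1})

/-- A rational function on the metric graph: continuous, piecewise linear with integer
slopes on every edge. -/
structure RatFn where
  vertexVal : G.V → ℝ
  edgeVal : G.E → ℝ → ℝ
  pl : ∀ e, IsPLZ (edgeVal e)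
  src_eq : ∀ e, edgeVal e 0 = vertexVal (G.src e)
  tgt_eq : ∀ e, edgeVal e 1 = vertexVal (G.tgt e)

open Classical in
/-- ord_p(φ): the sum of the incoming slopes of φ at the point p. -/
noncomputable def ordAt [Fintype G.E] (φ : G.RatFn) : G.Pt → ℤ
  | Sum.inl v =>
      ∑ e : G.E, ((if G.src e = v then -(rightSlope (φ.edgeVal e) 0) else 0) +
                  (if G.tgt e = v then leftSlope (φ.edgeVal e) 1 else 0))
  | Sum.inr p => leftSlope (φ.edgeVal p.1) p.2.1 - rightSlope (φ.edgeVal p.1) p.2.1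

/-- Divisors on the metric graph. -/
abbrev Div : Type := G.Pt →₀ ℤ

/-- The degree of a divisor. -/
noncomputable def degDiv (D : G.Div) : ℤ := Finsupp.sum D (fun _ n => n)

/-- Effective divisors. -/
def Effective (D : G.Div) : Prop := ∀ p : G.Pt, 0 ≤ D p

/-- Linear equivalence of divisors: D' − D is the divisor of a rational function. -/
noncomputable def LinEquiv [Fintype G.E] (D D' : G.Div) : Prop :=
  ∃ φ : G.RatFn, ∀ p : G.Pt, D' p = D p + G.ordAt φ p

/-- D has rank at least one: for every point P, |D − P| ≠ ∅. -/
noncomputable def RankGE1 [Fintype G.E] (D : G.Div) : Prop :=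
  ∀ p : G.Pt, ∃ D' : G.Div, G.Effective D' ∧
    G.LinEquiv (D - Finsupp.single p 1) D'

end MultiGraph

/-- The graph G_r: vertices v_0, …, v_{r-1}, with exactly k+1 parallel edges between
v_{k-1} and v_k for k = 1, …, r−1 (i.e., with 1-based indexing, i edges between
v_{i−1} and v_i for i = 2, …, r). -/
def Gr (r : ℕ) : MultiGraph where
  V := Fin r
  E := {q : Σ i : Fin r, Fin (i.1 + 1) // 0 < q.1.1}
  src q := ⟨q.1.1.1 - 1, lt_of_le_of_lt (Nat.sub_le _ _) q.1.1.isLt⟩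
  tgt q := q.1.1

instance (r : ℕ) : Fintype (Gr r).E :=
  inferInstanceAs (Fintype {q : Σ i : Fin r, Fin (i.1 + 1) // 0 < q.1.1})

/-- The divisor v_1 + v_2 + ⋯ + v_r on Γ_r. -/
noncomputable def allVertices (r : ℕ) : (Gr r).Div :=
  ∑ v : Fin r, Finsupp.single (Sum.inl v : (Gr r).Pt) 1

section SlopeLemmas

lemma rightSlope_spec {g : ℝ → ℝ} {a : ℝ} {m : ℤ} {δ : ℝ} (hδ : 0 < δ)
    (h : ∀ x ∈ Set.Icc a (a + δ), g x = g a + (m : ℝ) * (x - a)) :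
    rightSlope g a = m := by
  have hex : ∃ m : ℤ, ∃ δ > (0:ℝ), ∀ x ∈ Set.Icc a (a + δ), g x = g a + (m : ℝ) * (x - a) :=
    ⟨m, δ, hδ, h⟩
  rw [rightSlope, dif_pos hex]
  obtain ⟨δ', hδ', h'⟩ := hex.choose_spec
  have hε : 0 < min δ δ' := lt_min hδ hδ'
  have h1 := h (a + min δ δ') ⟨by linarith, by have := min_le_left δ δ'; linarith⟩
  have h2 := h' (a + min δ δ') ⟨by linarith, by have := min_le_right δ δ'; linarith⟩
  have hsimp : a + min δ δ' - a = min δ δ' := by ring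
  rw [hsimp] at h1 h2
  have hmm : (hex.choose : ℝ) * min δ δ' = (m : ℝ) * min δ δ' := by linarith
  have := mul_right_cancel₀ (ne_of_gt hε) hmm
  exact_mod_cast this

lemma leftSlope_spec {g : ℝ → ℝ} {a : ℝ} {m : ℤ} {δ : ℝ} (hδ : 0 < δ)
    (h : ∀ x ∈ Set.Icc (a - δ) a, g x = g a + (m : ℝ) * (x - a)) :
    leftSlope g a = m := by
  have hex : ∃ m : ℤ, ∃ δ > (0:ℝ), ∀ x ∈ Set.Icc (a - δ) a, g x = g a + (m : ℝ) * (x - a) :=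
    ⟨m, δ, hδ, h⟩
  rw [leftSlope, dif_pos hex]
  obtain ⟨δ', hδ', h'⟩ := hex.choose_spec
  have hε : 0 < min δ δ' := lt_min hδ hδ'
  have h1 := h (a - min δ δ') ⟨by have := min_le_left δ δ'; linarith, by linarith⟩
  have h2 := h' (a - min δ δ') ⟨by have := min_le_right δ δ'; linarith, by linarith⟩
  have hsimp : a - min δ δ' - a = -(min δ δ') := by ring
  rw [hsimp] at h1 h2
  have hmm : (hex.choose : ℝ) * -(min δ δ') = (m : ℝ) * -(min δ δ') := by linarith
  have := mul_right_cancel₀ (neg_ne_zero.mpr (ne_of_gt hε)) hmm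
  exact_mod_cast this

lemma rightSlope_zero (a : ℝ) : rightSlope (fun _ => (0:ℝ)) a = 0 :=
  rightSlope_spec one_pos (by intro x _; simp)

lemma leftSlope_zero (a : ℝ) : leftSlope (fun _ => (0:ℝ)) a = 0 :=
  leftSlope_spec one_pos (by intro x _; simp)

lemma IsPLZ_zero : IsPLZ (fun _ => (0:ℝ)) := by
  refine ⟨1, ![0, 1], rfl, rfl, ?_, ?_⟩
  · rw [Fin.monotone_iff_le_succ]
    intro i
    fin_cases i <;> norm_num
  · intro i
    exact ⟨0, by intro x _; simp⟩

end SlopeLemmas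

section HatF

/-- The trapezoid function: slope 1 on [0,c], flat at height c on [c,1-c], slope -1
on [1-c,1]. -/
noncomputable def hatF (c x : ℝ) : ℝ := min (min x (1 - x)) c

variable {c : ℝ}

lemma hatF_left (hcc : c ≤ 1 - c) {x : ℝ} (hx : x ∈ Set.Icc (0:ℝ) c) : hatF c x = x := by
  obtain ⟨h0, h1⟩ := hx
  unfold hatF
  rw [min_eq_left (by linarith : x ≤ 1 - x), min_eq_left h1]

lemma hatF_mid {x : ℝ} (hx : x ∈ Set.Icc c (1 - c)) : hatF c x = c := by
  obtain ⟨h0, h1⟩ := hx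
  unfold hatF
  rw [min_eq_right (le_min h0 (by linarith))]

lemma hatF_right (hcc : c ≤ 1 - c) {x : ℝ} (hx : x ∈ Set.Icc (1 - c) 1) : hatF c x = 1 - x := by
  obtain ⟨h0, h1⟩ := hx
  unfold hatF
  rw [min_eq_right (by linarith : 1 - x ≤ x), min_eq_left (by linarith)]

lemma hatF_zero (hc : 0 < c) (hcc : c ≤ 1 - c) : hatF c 0 = 0 :=
  hatF_left hcc ⟨le_rfl, le_of_lt hc⟩

lemma hatF_one (hc : 0 < c) (hcc : c ≤ 1 - c) : hatF c 1 = 0 := by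
  have := hatF_right hcc (x := 1) ⟨by linarith, le_rfl⟩
  simpa using this

lemma hatF_PLZ (hc : 0 < c) (hcc : c ≤ 1 - c) : IsPLZ (hatF c) := by
  refine ⟨3, ![0, c, 1 - c, 1], rfl, rfl, ?_, ?_⟩
  · rw [Fin.monotone_iff_le_succ]
    intro i
    fin_cases i
    · show (0:ℝ) ≤ c; linarith
    · show c ≤ 1 - c; linarith
    · show (1:ℝ) - c ≤ 1; linarith
  · intro i
    fin_cases i
    · refine ⟨1, ?_⟩
      show ∀ x ∈ Set.Icc (0:ℝ) c, hatF c x = hatF c 0 + ((1:ℤ):ℝ) * (x - 0)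
      intro x hx
      rw [hatF_left hcc hx, hatF_zero hc hcc]
      push_cast; ring
    · refine ⟨0, ?_⟩
      show ∀ x ∈ Set.Icc c (1 - c), hatF c x = hatF c c + ((0:ℤ):ℝ) * (x - c)
      intro x hx
      rw [hatF_mid hx, hatF_mid ⟨le_rfl, hcc⟩]
      push_cast; ring
    · refine ⟨-1, ?_⟩
      show ∀ x ∈ Set.Icc (1 - c) 1, hatF c x = hatF c (1 - c) + ((-1:ℤ):ℝ) * (x - (1 - c))
      intro x hx
      rw [hatF_right hcc hx, hatF_right hcc ⟨le_rfl, by linarith⟩]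
      push_cast; ring

lemma hatF_rightSlope1 (hcc : c ≤ 1 - c) {s : ℝ} (hs0 : 0 ≤ s) (hs : s < c) :
    rightSlope (hatF c) s = 1 := by
  apply rightSlope_spec (δ := c - s) (by linarith)
  intro x hx
  obtain ⟨h0, h1⟩ := hx
  rw [hatF_left hcc ⟨by linarith, by linarith⟩, hatF_left hcc ⟨hs0, le_of_lt hs⟩]
  push_cast; ring

lemma hatF_rightSlope0 {s : ℝ} (hs0 : c ≤ s) (hs : s < 1 - c) :
    rightSlope (hatF c) s = 0 := by
  apply rightSlope_spec (δ := (1 - c) - s) (by linarith)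
  intro x hx
  obtain ⟨h0, h1⟩ := hx
  rw [hatF_mid ⟨by linarith, by linarith⟩, hatF_mid ⟨hs0, le_of_lt hs⟩]
  push_cast; ring

lemma hatF_rightSlopeNeg1 (hcc : c ≤ 1 - c) {s : ℝ} (hs0 : 1 - c ≤ s) (hs : s < 1) :
    rightSlope (hatF c) s = -1 := by
  apply rightSlope_spec (δ := 1 - s) (by linarith)
  intro x hx
  obtain ⟨h0, h1⟩ := hx
  rw [hatF_right hcc ⟨by linarith, by linarith⟩, hatF_right hcc ⟨hs0, le_of_lt hs⟩]
  push_cast; ring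

lemma hatF_leftSlope1 (hcc : c ≤ 1 - c) {s : ℝ} (hs0 : 0 < s) (hs : s ≤ c) :
    leftSlope (hatF c) s = 1 := by
  apply leftSlope_spec (δ := s) hs0
  intro x hx
  obtain ⟨h0, h1⟩ := hx
  rw [hatF_left hcc ⟨by linarith, by linarith⟩, hatF_left hcc ⟨le_of_lt hs0, hs⟩]
  push_cast; ring

lemma hatF_leftSlope0 {s : ℝ} (hs0 : c < s) (hs : s ≤ 1 - c) :
    leftSlope (hatF c) s = 0 := by
  apply leftSlope_spec (δ := s - c) (by linarith)
  intro x hx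
  obtain ⟨h0, h1⟩ := hx
  rw [hatF_mid ⟨by linarith, by linarith⟩, hatF_mid ⟨le_of_lt hs0, hs⟩]
  push_cast; ring

lemma hatF_leftSlopeNeg1 (hcc : c ≤ 1 - c) {s : ℝ} (hs0 : 1 - c < s) (hs : s ≤ 1) :
    leftSlope (hatF c) s = -1 := by
  apply leftSlope_spec (δ := s - (1 - c)) (by linarith)
  intro x hx
  obtain ⟨h0, h1⟩ := hx
  rw [hatF_right hcc ⟨by linarith, by linarith⟩, hatF_right hcc ⟨le_of_lt hs0, hs⟩]
  push_cast; ring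

end HatF

section GraphAux

/-- The zero rational function on any multigraph. -/
noncomputable def zeroFn (G : MultiGraph) : G.RatFn where
  vertexVal _ := 0
  edgeVal _ _ := 0
  pl _ := IsPLZ_zero
  src_eq _ := rfl
  tgt_eq _ := rfl

lemma ordAt_zeroFn (G : MultiGraph) [Fintype G.E] (q : G.Pt) :
    G.ordAt (zeroFn G) q = 0 := by
  cases q with
  | inl v => simp [MultiGraph.ordAt, zeroFn, rightSlope_zero, leftSlope_zero]
  | inr x => simp [MultiGraph.ordAt, zeroFn, rightSlope_zero, leftSlope_zero]

lemma allVertices_apply_inl (r : ℕ) (v : Fin r) : allVertices r (Sum.inl v) = 1 := by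
  classical
  unfold allVertices
  erw [Finsupp.finset_sum_apply]
  rw [Finset.sum_eq_single v]
  · erw [Finsupp.single_apply, if_pos rfl]
  · intro b _ hb
    erw [Finsupp.single_apply, if_neg (fun hh => hb (Sum.inl_injective hh))]
  · intro hv; exact absurd (Finset.mem_univ v) hv

lemma allVertices_apply_inr (r : ℕ) (x : (Gr r).E × {t : ℝ // 0 < t ∧ t < 1}) :
    allVertices r (Sum.inr x) = 0 := by
  classical
  unfold allVertices
  erw [Finsupp.finset_sum_apply]
  apply Finset.sum_eq_zero
  intro v _
  erw [Finsupp.single_apply, if_neg Sum.inl_ne_inr]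

lemma Gr_src_ne_tgt (r : ℕ) (e : (Gr r).E) : (Gr r).src e ≠ (Gr r).tgt e := by
  intro h
  have h2 := congrArg Fin.val h
  have h3 := e.2
  simp [Gr] at h2 h3
  omega

lemma Pt_inl_inj (G : MultiGraph) (a b : G.V) :
    (@Eq G.Pt (Sum.inl a) (Sum.inl b)) ↔ a = b :=
  ⟨fun h => Sum.inl_injective h, fun h => by rw [h]⟩

lemma Pt_inr_inj (G : MultiGraph) (x y : G.E × {t : ℝ // 0 < t ∧ t < 1}) :
    (@Eq G.Pt (Sum.inr x) (Sum.inr y)) ↔ x = y :=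
  ⟨fun h => Sum.inr_injective h, fun h => by rw [h]⟩

lemma Pt_inl_ne_inr (G : MultiGraph) (a : G.V) (x : G.E × {t : ℝ // 0 < t ∧ t < 1}) :
    ¬ @Eq G.Pt (Sum.inl a) (Sum.inr x) := Sum.inl_ne_inr

lemma Pt_inr_ne_inl (G : MultiGraph) (x : G.E × {t : ℝ // 0 < t ∧ t < 1}) (a : G.V) :
    ¬ @Eq G.Pt (Sum.inr x) (Sum.inl a) := Sum.inr_ne_inl

end GraphAux

theorem allVertices_rank_ge_one (r : ℕ) (hr : 1 ≤ r) :
    (Gr r).RankGE1 (allVertices r) := by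
  classical
  intro p
  cases p with
  | inl v =>
      -- D - v is already effective; use the zero function.
      refine ⟨allVertices r - (Finsupp.single (Sum.inl v) 1 : (Gr r).Div), ?_, ?_⟩
      · intro q
        cases q with
        | inl w =>
            erw [Finsupp.sub_apply, allVertices_apply_inl, Finsupp.single_apply]
            split_ifs <;> norm_num
        | inr x =>
            erw [Finsupp.sub_apply, allVertices_apply_inr, Finsupp.single_apply,
              if_neg Sum.inl_ne_inr]
            norm_num
      · exact ⟨zeroFn (Gr r), fun q => by rw [ordAt_zeroFn]; ring⟩
  | inr x =>
      obtain ⟨e₀, t, ht0, ht1⟩ := x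
      set c : ℝ := min t (1 - t) with hcdef
      have hc : 0 < c := lt_min ht0 (by linarith)
      have hct : c ≤ t := min_le_left _ _
      have hct' : c ≤ 1 - t := min_le_right _ _
      have hcc : c ≤ 1 - c := by linarith
      have hc1 : c < 1 := by linarith
      have hd0 : 0 < 1 - c := by linarith
      have hd1 : 1 - c < 1 := by linarith
      have htc : t = c ∨ t = 1 - c := by
        rcases le_total t (1 - t) with h | h
        · left; rw [hcdef, min_eq_left h]
        · right; rw [hcdef, min_eq_right h]; ring
      -- the rational function
      set φ : (Gr r).RatFn :=
        { vertexVal := fun _ => 0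
          edgeVal := fun e x => if e = e₀ then hatF c x else 0
          pl := fun e => by
            by_cases h : e = e₀
            · simp only [h, if_pos rfl]; exact hatF_PLZ hc hcc
            · simp only [if_neg h]; exact IsPLZ_zero
          src_eq := fun e => by
            by_cases h : e = e₀
            · simp only [h, if_pos rfl]; exact hatF_zero hc hcc
            · simp only [if_neg h]
          tgt_eq := fun e => by
            by_cases h : e = e₀
            · simp only [h, if_pos rfl]; exact hatF_one hc hcc
            · simp only [if_neg h] } with hφdef
      have hφe : φ.edgeVal e₀ = hatF c := by
        funext x; simp [hφdef]
      have hφne : ∀ e, e ≠ e₀ → φ.edgeVal e = fun _ => (0:ℝ) := by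
        intro e he; funext x; simp [hφdef, he]
      -- ord computations
      have hOrdInl : ∀ w : Fin r, (Gr r).ordAt φ (Sum.inl w) =
          (if (Gr r).src e₀ = w then -1 else 0) + (if (Gr r).tgt e₀ = w then -1 else 0) := by
        intro w
        show (∑ e : (Gr r).E,
          ((if (Gr r).src e = w then -(rightSlope (φ.edgeVal e) 0) else 0) +
           (if (Gr r).tgt e = w then leftSlope (φ.edgeVal e) 1 else 0))) = _
        rw [Finset.sum_eq_single e₀]
        · rw [hφe, hatF_rightSlope1 hcc le_rfl hc, hatF_leftSlopeNeg1 hcc (by linarith) le_rfl]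
        · intro e _ he
          rw [hφne e he, rightSlope_zero, leftSlope_zero]
          simp
        · intro h; exact absurd (Finset.mem_univ e₀) h
      have hOrdInr : ∀ (e : (Gr r).E) (s : ℝ) (hs0 : 0 < s) (hs1 : s < 1),
          (Gr r).ordAt φ (Sum.inr ⟨e, ⟨s, hs0, hs1⟩⟩) =
            (if e₀ = e ∧ c = s then 1 else 0) + (if e₀ = e ∧ 1 - c = s then 1 else 0) := by
        intro e s hs0 hs1
        show leftSlope (φ.edgeVal e) s - rightSlope (φ.edgeVal e) s = _
        by_cases he : e = e₀
        · subst he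
          rw [hφe]
          simp only [true_and]
          rcases lt_trichotomy s c with h | h | h
          · rw [hatF_leftSlope1 hcc hs0 (le_of_lt h), hatF_rightSlope1 hcc (le_of_lt hs0) h,
              if_neg (by intro hh; linarith), if_neg (by intro hh; linarith)]
            norm_num
          · rcases lt_or_eq_of_le (by linarith : s ≤ 1 - c) with h2 | h2
            · rw [hatF_leftSlope1 hcc hs0 (le_of_eq h), hatF_rightSlope0 (le_of_eq h.symm) h2,
                if_pos h.symm, if_neg (by intro hh; linarith)]
              norm_num
            · rw [hatF_leftSlope1 hcc hs0 (le_of_eq h),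
                hatF_rightSlopeNeg1 hcc (le_of_eq h2.symm) hs1, if_pos h.symm,
                if_pos h2.symm]
              norm_num
          · rcases lt_trichotomy s (1 - c) with h2 | h2 | h2
            · rw [hatF_leftSlope0 h (le_of_lt h2), hatF_rightSlope0 (le_of_lt h) h2,
                if_neg (by intro hh; linarith), if_neg (by intro hh; linarith)]
              norm_num
            · rw [hatF_leftSlope0 h (le_of_eq h2), hatF_rightSlopeNeg1 hcc (le_of_eq h2.symm) hs1,
                if_neg (by intro hh; linarith), if_pos h2.symm]
              norm_num
            · rw [hatF_leftSlopeNeg1 hcc h2 (le_of_lt hs1),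
                hatF_rightSlopeNeg1 hcc (le_of_lt h2) hs1,
                if_neg (by intro hh; linarith), if_neg (by intro hh; linarith)]
              norm_num
        · rw [hφne e he, rightSlope_zero, leftSlope_zero,
            if_neg (fun hh => he hh.1.symm), if_neg (fun hh => he hh.1.symm)]
          norm_num
      -- the effective divisor
      refine ⟨allVertices r - (Finsupp.single (Sum.inl ((Gr r).src e₀)) 1 : (Gr r).Div)
          - (Finsupp.single (Sum.inl ((Gr r).tgt e₀)) 1 : (Gr r).Div)
          + (Finsupp.single (Sum.inr ⟨e₀, ⟨c, hc, hc1⟩⟩) 1 : (Gr r).Div)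
          + (Finsupp.single (Sum.inr ⟨e₀, ⟨1 - c, hd0, hd1⟩⟩) 1 : (Gr r).Div)
          - (Finsupp.single (Sum.inr ⟨e₀, ⟨t, ht0, ht1⟩⟩) 1 : (Gr r).Div), ?_, ?_⟩
      · -- effectiveness
        intro q
        cases q with
        | inl w =>
            erw [Finsupp.sub_apply, Finsupp.add_apply, Finsupp.add_apply, Finsupp.sub_apply,
              Finsupp.sub_apply, Finsupp.single_apply, Finsupp.single_apply, Finsupp.single_apply,
              Finsupp.single_apply, Finsupp.single_apply, allVertices_apply_inl]
            simp only [Finsupp.sub_apply, Finsupp.add_apply, Finsupp.single_apply,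
              allVertices_apply_inl, Pt_inl_inj, Pt_inr_ne_inl, if_false]
            by_cases h1 : (Gr r).src e₀ = w <;> by_cases h2 : (Gr r).tgt e₀ = w
            · exact absurd (h1.trans h2.symm) (Gr_src_ne_tgt r e₀)
            · norm_num [h1, h2]
            · norm_num [h1, h2]
            · norm_num [h1, h2]
        | inr x =>
            obtain ⟨e, s, hs0, hs1⟩ := x
            erw [Finsupp.sub_apply, Finsupp.add_apply, Finsupp.add_apply, Finsupp.sub_apply,
              Finsupp.sub_apply, Finsupp.single_apply, Finsupp.single_apply, Finsupp.single_apply,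
              Finsupp.single_apply, Finsupp.single_apply, allVertices_apply_inr]
            simp only [Finsupp.sub_apply, Finsupp.add_apply, Finsupp.single_apply,
              allVertices_apply_inr, Pt_inr_inj, Pt_inl_ne_inr, Prod.mk.injEq,
              Subtype.mk.injEq, if_false]
            by_cases hq : e₀ = e ∧ t = s
            · rw [if_pos hq]
              rcases htc with ht | ht
              · rw [if_pos ⟨hq.1, ht.symm.trans hq.2⟩]
                split_ifs <;> norm_num
              · rw [if_pos (⟨hq.1, ht.symm.trans hq.2⟩ : e₀ = e ∧ 1 - c = s)]
                split_ifs <;> norm_num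
            · rw [if_neg hq]
              split_ifs <;> norm_num
      · -- linear equivalence
        refine ⟨φ, ?_⟩
        intro q
        cases q with
        | inl w =>
            rw [hOrdInl w]
            erw [Finsupp.sub_apply, Finsupp.add_apply, Finsupp.add_apply, Finsupp.sub_apply,
              Finsupp.sub_apply, Finsupp.sub_apply, Finsupp.single_apply, Finsupp.single_apply, Finsupp.single_apply,
              Finsupp.single_apply, Finsupp.single_apply, allVertices_apply_inl]
            simp only [Finsupp.sub_apply, Finsupp.add_apply, Finsupp.single_apply,
              allVertices_apply_inl, Pt_inl_inj, Pt_inr_ne_inl, if_false]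
            split_ifs <;> ring
        | inr x =>
            obtain ⟨e, s, hs0, hs1⟩ := x
            rw [hOrdInr e s hs0 hs1]
            erw [Finsupp.sub_apply, Finsupp.add_apply, Finsupp.add_apply, Finsupp.sub_apply,
              Finsupp.sub_apply, Finsupp.sub_apply, Finsupp.single_apply, Finsupp.single_apply, Finsupp.single_apply,
              Finsupp.single_apply, Finsupp.single_apply, allVertices_apply_inr]
            simp only [Finsupp.sub_apply, Finsupp.add_apply, Finsupp.single_apply,
              allVertices_apply_inr, Pt_inr_inj, Pt_inl_ne_inr, Prod.mk.injEq,
              Subtype.mk.injEq, if_false]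
            split_ifs <;> ring
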